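/- For the Gårding cone Γ^k with 1 ≤ k ≤ n/2, the critical exponent p_{Γ^k} = max{p : Γ^k ⊆ A^(p)} equals n(k-1)/(n-k) + 2, and this value lies in [2, n]. -/

import Mathlib

open Finset
open scoped BigOperators

/-- The cone `A^(p) = {λ ∈ ℝⁿ : (p-2) λ_k + Σᵢ λᵢ ≥ 0 for every k}`. -/
def Acone (n : ℕ) (p : ℝ) : Set (Fin n → ℝ) :=
  {l | ∀ k, 0 ≤ (p - 2) * l k + ∑ i, l i}

/-- The cone `R^(r)`: all `λ ∈ ℝⁿ` such that for every rearrangement of `λ`,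
`(n-r) Σ_{k≤r} λ_{i_k} + r Σ_{k>r} λ_{i_k} ≥ 0`. -/
def Rcone (n r : ℕ) : Set (Fin n → ℝ) :=
  {l | ∀ σ : Equiv.Perm (Fin n),
    0 ≤ ((n : ℝ) - r) * ∑ i ∈ Finset.univ.filter (fun i : Fin n => (i : ℕ) < r), l (σ i)
        + (r : ℝ) * ∑ i ∈ Finset.univ.filter (fun i : Fin n => r ≤ (i : ℕ)), l (σ i)}

/-- The Gårding cone `Γ^k = {λ ∈ ℝⁿ : σ₁(λ) ≥ 0, ..., σ_k(λ) ≥ 0}`. -/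
def GardingCone (n k : ℕ) : Set (Fin n → ℝ) :=
  {l | ∀ j ∈ Finset.Icc 1 k, 0 ≤ (Multiset.map l Finset.univ.val).esymm j}


section PGAux
open Polynomial


namespace PG

lemma esymm_zero' (s : Multiset ℝ) : s.esymm 0 = 1 := by
  simp [Multiset.esymm, Multiset.powersetCard_zero_left]

lemma esymm_one' (s : Multiset ℝ) : s.esymm 1 = s.sum := by
  rw [Multiset.esymm, Multiset.powersetCard_one, Multiset.map_map]
  simp [Function.comp]

lemma esymm_of_card_lt {s : Multiset ℝ} {j : ℕ} (h : Multiset.card s < j) :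
    s.esymm j = 0 := by
  simp [Multiset.esymm, Multiset.powersetCard_eq_empty _ h]

lemma esymm_cons (a : ℝ) (s : Multiset ℝ) (j : ℕ) :
    (a ::ₘ s).esymm (j + 1) = s.esymm (j + 1) + a * s.esymm j := by
  rw [Multiset.esymm, Multiset.powersetCard_cons, Multiset.map_add, Multiset.sum_add,
    Multiset.map_map]
  congr 1
  rw [Multiset.esymm, ← Multiset.sum_map_mul_left]
  congr 1
  apply Multiset.map_congr rfl
  intro t _
  simp [Multiset.prod_cons]

lemma esymm_card (s : Multiset ℝ) : s.esymm (Multiset.card s) = s.prod := by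
  induction s using Multiset.induction_on with
  | empty => simp [esymm_zero']
  | cons a s ih =>
    rw [Multiset.card_cons, esymm_cons, esymm_of_card_lt (by simp), Multiset.prod_cons, ih]
    ring

lemma sq_sum_le (s : Multiset ℝ) :
    s.sum ^ 2 ≤ (Multiset.card s : ℝ) * (s.map (fun x => x ^ 2)).sum := by
  induction s using Multiset.induction_on with
  | empty => simp
  | cons a s ih =>
    rcases eq_or_ne s 0 with rfl | hs0
    · simp
    · have hQ : (0:ℝ) ≤ (s.map (fun x => x ^ 2)).sum := by
        apply Multiset.sum_nonneg; intro x hx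
        obtain ⟨y, _, rfl⟩ := Multiset.mem_map.1 hx
        positivity
      have hcpos : (0:ℝ) < (Multiset.card s : ℝ) := by
        have : s.card ≠ 0 := by simpa using hs0
        exact_mod_cast Nat.pos_of_ne_zero this
      rw [Multiset.sum_cons, Multiset.card_cons, Multiset.map_cons, Multiset.sum_cons]
      push_cast
      rw [← mul_le_mul_iff_right₀ hcpos]
      nlinarith [sq_nonneg ((Multiset.card s : ℝ) * a - s.sum), ih, hQ,
        mul_le_mul_of_nonneg_left ih (le_of_lt hcpos)]

lemma sum_sq_identity (s : Multiset ℝ) :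
    s.sum ^ 2 = (s.map (fun x => x ^ 2)).sum + 2 * s.esymm 2 := by
  induction s using Multiset.induction_on with
  | empty => simp [esymm_of_card_lt (by simp : Multiset.card (0 : Multiset ℝ) < 2)]
  | cons a s ih =>
    have hc := esymm_cons a s 1
    norm_num at hc
    rw [Multiset.sum_cons, Multiset.map_cons, Multiset.sum_cons, hc, esymm_one']
    linear_combination ih

lemma esymm_inv (s : Multiset ℝ) (h : ∀ x ∈ s, x ≠ 0) :
    ∀ j ≤ Multiset.card s,
      (s.map (fun x => x⁻¹)).esymm j * s.prod = s.esymm (Multiset.card s - j) := by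
  induction s using Multiset.induction_on with
  | empty =>
    intro j hj
    simp only [Multiset.card_zero, Nat.le_zero] at hj
    subst hj
    simp [esymm_zero']
  | cons a s ih =>
    intro j hj
    have ha : a ≠ 0 := h a (Multiset.mem_cons_self a s)
    have haa : a * a⁻¹ = 1 := mul_inv_cancel₀ ha
    have hs : ∀ x ∈ s, x ≠ 0 := fun x hx => h x (Multiset.mem_cons_of_mem hx)
    rw [Multiset.card_cons] at hj ⊢
    match j with
    | 0 =>
      rw [esymm_zero', one_mul, Nat.sub_zero,
        show Multiset.card s + 1 = Multiset.card (a ::ₘ s) from (Multiset.card_cons a s).symm,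
        esymm_card]
    | (i+1) =>
      rw [Multiset.map_cons, esymm_cons, Multiset.prod_cons]
      have hi : i ≤ Multiset.card s := Nat.lt_succ_iff.mp hj
      rcases Nat.lt_or_ge i (Multiset.card s) with hlt | hge
      · have h1 := ih hs (i+1) hlt
        have h2 := ih hs i hi
        have hsub : Multiset.card s + 1 - (i + 1) = (Multiset.card s - (i+1)) + 1 := by omega
        rw [hsub, esymm_cons]
        have hsub2 : Multiset.card s - i = Multiset.card s - (i+1) + 1 := by omega
        rw [hsub2] at h2
        linear_combination a * h1 + h2 + ((Multiset.map (fun x => x⁻¹) s).esymm i * s.prod) * haa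
      · have hieq : i = Multiset.card s := le_antisymm hi hge
        subst hieq
        have h2 := ih hs (Multiset.card s) le_rfl
        rw [esymm_of_card_lt (by simp)]
        rw [Nat.sub_self, esymm_zero'] at h2
        have hz : Multiset.card s + 1 - (Multiset.card s + 1) = 0 := by omega
        rw [hz, show (a ::ₘ s).esymm 0 = 1 from esymm_zero' _]
        linear_combination ((Multiset.map (fun x => x⁻¹) s).esymm (Multiset.card s) * s.prod) * haa + h2

lemma lemC (u : Multiset ℝ) (d : ℕ) (hc : Multiset.card u = d) (hd : 2 ≤ d) :
    2 * (d:ℝ) * (u.esymm (d-2) * u.esymm d) ≤ ((d:ℝ) - 1) * (u.esymm (d-1))^2 := by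
  have hd' : (2:ℝ) ≤ (d:ℝ) := by exact_mod_cast hd
  by_cases hz : ∃ x ∈ u, x = 0
  · obtain ⟨x, hx, rfl⟩ := hz
    have h0 : u.esymm d = 0 := by rw [← hc, esymm_card]; exact Multiset.prod_eq_zero hx
    rw [h0, mul_zero, mul_zero]
    exact mul_nonneg (by linarith) (sq_nonneg _)
  · push_neg at hz
    set v := u.map (fun x => x⁻¹) with hv
    have hcv : Multiset.card v = d := by simp [hv, hc]
    have h1 : v.esymm 1 * u.prod = u.esymm (d - 1) := by
      have := esymm_inv u hz 1 (by omega)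
      rwa [hc] at this
    have h2 : v.esymm 2 * u.prod = u.esymm (d - 2) := by
      have := esymm_inv u hz 2 (by omega)
      rwa [hc] at this
    have hprod : u.esymm d = u.prod := by rw [← hc, esymm_card]
    have key : 2 * (d:ℝ) * v.esymm 2 ≤ ((d:ℝ) - 1) * (v.esymm 1)^2 := by
      have hineq := sq_sum_le v
      have hid := sum_sq_identity v
      rw [hcv] at hineq
      have hidd := congrArg (fun x => (d:ℝ) * x) hid
      rw [esymm_one']
      nlinarith [hineq, hid, hidd]
    have hm := mul_le_mul_of_nonneg_right key (sq_nonneg u.prod)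
    calc 2 * (d:ℝ) * (u.esymm (d-2) * u.esymm d)
        = 2 * (d:ℝ) * v.esymm 2 * u.prod ^ 2 := by
          rw [hprod, ← h2]; ring
      _ ≤ ((d:ℝ) - 1) * (v.esymm 1)^2 * u.prod ^ 2 := hm
      _ = ((d:ℝ) - 1) * (u.esymm (d-1))^2 := by rw [← h1]; ring

lemma lemA (s : Multiset ℝ) (m : ℕ) (hc : Multiset.card s = m) (hm : 1 ≤ m) :
    ∃ s' : Multiset ℝ, Multiset.card s' = m - 1 ∧
      ∀ i ≤ m - 1, ((m - i : ℕ) : ℝ) * s.esymm i = (m : ℝ) * s'.esymm i := by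
  set f := (s.map fun a => X - C a).prod with hf
  have hmon : f.Monic := monic_multiset_prod_of_monic _ _ (fun a _ => monic_X_sub_C a)
  have hdeg : f.natDegree = m := by
    rw [hf, natDegree_multiset_prod_X_sub_C_eq_card, hc]
  have hroots : f.roots = s := roots_multiset_prod_X_sub_C s
  have hmne : ((m:ℝ)) ≠ 0 := Nat.cast_ne_zero.mpr (by omega)
  have hcoefftop : f.derivative.coeff (m - 1) = (m : ℝ) := by
    rw [coeff_derivative, Nat.sub_add_cancel hm]
    have h1 : f.coeff m = 1 := by
      rw [← hdeg]; exact hmon.coeff_natDegree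
    rw [h1, one_mul, Nat.cast_sub hm]
    push_cast; ring
  have hdeg' : f.derivative.natDegree = m - 1 := by
    refine le_antisymm ?_ ?_
    · have := natDegree_derivative_le f
      omega
    · exact le_natDegree_of_ne_zero (by rw [hcoefftop]; exact hmne)
  have hlead' : f.derivative.leadingCoeff = (m : ℝ) := by
    rw [leadingCoeff, hdeg', hcoefftop]
  have hcardroots : Multiset.card f.derivative.roots = m - 1 := by
    refine le_antisymm ?_ ?_
    · have := f.derivative.card_roots'
      omega
    · have h2 := f.card_roots_le_derivative
      rw [hroots, hc] at h2
      omega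
  refine ⟨f.derivative.roots, hcardroots, fun i hi => ?_⟩
  set kk := m - 1 - i with hkk
  have hAcoeff : f.coeff (kk + 1) = (-1 : ℝ) ^ i * s.esymm i := by
    have h := Polynomial.coeff_eq_esymm_roots_of_card
      (by rw [hroots, hc, hdeg] : Multiset.card f.roots = f.natDegree)
      (by rw [hdeg]; omega : kk + 1 ≤ f.natDegree)
    rw [h, hroots, hdeg, hmon.leadingCoeff, one_mul]
    congr 2 <;> omega
  have hBcoeff : f.derivative.coeff kk = (m : ℝ) * ((-1 : ℝ) ^ i * f.derivative.roots.esymm i) := by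
    have h := Polynomial.coeff_eq_esymm_roots_of_card
      (by rw [hcardroots, hdeg'] : Multiset.card f.derivative.roots = f.derivative.natDegree)
      (by rw [hdeg']; omega : kk ≤ f.derivative.natDegree)
    rw [h, hdeg', hlead']
    have : m - 1 - kk = i := by omega
    rw [this]; ring
  have hCcoeff : f.derivative.coeff kk = f.coeff (kk + 1) * ((kk : ℝ) + 1) := by
    rw [coeff_derivative]
  rw [hAcoeff, hBcoeff] at hCcoeff
  have hne : ((-1 : ℝ) ^ i) ≠ 0 := by
    apply pow_ne_zero; norm_num
  have hkk1 : ((kk : ℝ) + 1) = ((m - i : ℕ) : ℝ) := by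
    have : kk + 1 = m - i := by omega
    rw [← this]; push_cast; ring
  apply mul_left_cancel₀ hne
  calc (-1:ℝ)^i * (((m - i : ℕ) : ℝ) * s.esymm i)
      = ((-1:ℝ)^i * s.esymm i) * ((kk:ℝ) + 1) := by rw [hkk1]; ring
    _ = (m : ℝ) * ((-1 : ℝ) ^ i * f.derivative.roots.esymm i) := hCcoeff.symm
    _ = (-1:ℝ)^i * ((m:ℝ) * f.derivative.roots.esymm i) := by ring

lemma lemB : ∀ (c : ℕ) (s : Multiset ℝ) (d : ℕ), Multiset.card s = d + c →
    ∃ u : Multiset ℝ, Multiset.card u = d ∧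
      ∀ i ≤ d, (((d + c).choose i : ℕ) : ℝ) * u.esymm i = ((d.choose i : ℕ) : ℝ) * s.esymm i := by
  intro c
  induction c with
  | zero =>
    intro s d hcs
    exact ⟨s, by omega, fun i _ => by rw [Nat.add_zero]⟩
  | succ c ih =>
    intro s d hcs
    obtain ⟨s', hcs', hrel⟩ := lemA s (d + c + 1) (by omega) (by omega)
    obtain ⟨u, hcu, hrel'⟩ := ih s' d (by omega)
    refine ⟨u, hcu, fun i hi => ?_⟩
    set m := d + c + 1 with hm
    have hchoose : ((d + c).choose i) * m = m.choose i * (m - i) := by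
      have := Nat.choose_mul_succ_eq (d + c) i
      rw [hm]; omega
    have hmine : ((m - i : ℕ) : ℝ) ≠ 0 := Nat.cast_ne_zero.mpr (by omega)
    apply mul_left_cancel₀ hmine
    have e1 : ((m - i : ℕ) : ℝ) * ((m.choose i : ℕ) : ℝ) * u.esymm i
        = (m : ℝ) * (((d + c).choose i : ℕ) : ℝ) * u.esymm i := by
      congr 1
      rw [← Nat.cast_mul, ← Nat.cast_mul]
      exact Nat.cast_inj.mpr (by rw [mul_comm, mul_comm m]; exact hchoose.symm)
    have e2 := hrel i (by omega)
    calc ((m - i : ℕ) : ℝ) * (((m.choose i : ℕ) : ℝ) * u.esymm i)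
        = (m : ℝ) * ((((d + c).choose i : ℕ) : ℝ) * u.esymm i) := by
          rw [← mul_assoc, e1]; ring
      _ = (m : ℝ) * ((((d.choose i : ℕ)) : ℝ) * s'.esymm i) := by rw [hrel' i hi]
      _ = ((d.choose i : ℕ) : ℝ) * ((m : ℝ) * s'.esymm i) := by ring
      _ = ((d.choose i : ℕ) : ℝ) * (((m - i : ℕ) : ℝ) * s.esymm i) := by rw [← e2]
      _ = ((m - i : ℕ) : ℝ) * (((d.choose i : ℕ) : ℝ) * s.esymm i) := by ring



lemma newton (s : Multiset ℝ) (j : ℕ) (hj : 1 ≤ j) (hjm : j + 1 ≤ Multiset.card s) :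
    ((Multiset.card s).choose j : ℝ)^2 * (s.esymm (j-1) * s.esymm (j+1)) ≤
      (((Multiset.card s).choose (j-1) : ℝ) * ((Multiset.card s).choose (j+1) : ℝ)) *
        s.esymm j ^ 2 := by
  set m := Multiset.card s with hm
  obtain ⟨u, hcu, hrel⟩ := lemB (m - (j+1)) s (j+1) (by omega)
  rw [show j + 1 + (m - (j+1)) = m from by omega] at hrel
  have hC := lemC u (j+1) hcu (by omega)
  rw [show j + 1 - 2 = j - 1 from by omega, show j + 1 - 1 = j from by omega] at hC
  have ha1 : (0:ℝ) < (m.choose (j-1) : ℝ) := by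
    exact_mod_cast Nat.choose_pos (by omega : j - 1 ≤ m)
  have ha2 : (0:ℝ) < (m.choose j : ℝ) := by
    exact_mod_cast Nat.choose_pos (by omega : j ≤ m)
  have ha3 : (0:ℝ) < (m.choose (j+1) : ℝ) := by
    exact_mod_cast Nat.choose_pos (by omega : j + 1 ≤ m)
  have r1 := hrel (j-1) (by omega)
  have r2 := hrel j (by omega)
  have r3 := hrel (j+1) (by omega)
  have hb3 : (j+1).choose (j+1) = 1 := Nat.choose_self _
  have hb2 : (j+1).choose j = j+1 := Nat.choose_succ_self_right j
  have hb1 : 2 * ((j+1).choose (j-1)) = (j+1) * j := by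
    have h := Nat.add_one_mul_choose_eq j 1
    norm_num [Nat.choose_one_right] at h
    have hsymm : (j+1).choose (j-1) = (j+1).choose 2 := by
      rw [show j - 1 = (j+1) - 2 from by omega]
      exact Nat.choose_symm (by omega)
    rw [hsymm]
    omega
  have hu1 : u.esymm (j-1) = ((j+1).choose (j-1) : ℝ) * s.esymm (j-1) / (m.choose (j-1) : ℝ) := by
    rw [eq_div_iff ha1.ne']; linear_combination r1
  have hu2 : u.esymm j = ((j+1).choose j : ℝ) * s.esymm j / (m.choose j : ℝ) := by
    rw [eq_div_iff ha2.ne']; linear_combination r2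
  have hu3 : u.esymm (j+1) = ((j+1).choose (j+1) : ℝ) * s.esymm (j+1) / (m.choose (j+1) : ℝ) := by
    rw [eq_div_iff ha3.ne']; linear_combination r3
  rw [hu1, hu2, hu3, hb3, hb2] at hC
  field_simp at hC
  have hb1r : (((j+1).choose (j-1) : ℕ) : ℝ) = ((j:ℝ)+1)*(j:ℝ)/2 := by
    have : ((2 * ((j+1).choose (j-1)) : ℕ) : ℝ) = (((j+1) * j : ℕ) : ℝ) := by exact_mod_cast congrArg Nat.cast hb1
    push_cast at this
    linarith
  rw [hb1r] at hC
  have hpos : (0:ℝ) < (j:ℝ) * ((j:ℝ)+1)^2 := by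
    have : (1:ℝ) ≤ (j:ℝ) := by exact_mod_cast hj
    positivity
  rw [← mul_le_mul_iff_right₀ hpos]
  push_cast at hC ⊢
  nlinarith [hC]



end PG

namespace PG

lemma main_ineq (n k : ℕ) (hk2 : 2 ≤ k) (hkn : 2 * k ≤ n) (l : Fin n → ℝ)
    (hl : ∀ j ∈ Finset.Icc 1 k, 0 ≤ (Multiset.map l Finset.univ.val).esymm j)
    (i : Fin n) (hi : l i < 0) :
    0 ≤ (n:ℝ) * ((k:ℝ) - 1) * l i + ((n:ℝ) - (k:ℝ)) * ∑ j, l j := by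
  have hn4 : 4 ≤ n := by omega
  set t : ℝ := -l i with htdef
  have ht : 0 < t := by simp [htdef]; linarith
  set μ : Multiset ℝ := Multiset.map l ((Finset.univ.erase i).val) with hμ
  have hSm : Multiset.map l Finset.univ.val = l i ::ₘ μ := by
    rw [hμ, Finset.erase_val]
    have h1 : (Finset.univ.val : Multiset (Fin n)) = i ::ₘ Finset.univ.val.erase i :=
      (Multiset.cons_erase (by simp : i ∈ (Finset.univ.val : Multiset (Fin n)))).symm
    conv_lhs => rw [h1]
    rw [Multiset.map_cons]
  set m := n - 1 with hmdef
  have hcμ : Multiset.card μ = m := by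
    rw [hμ, Multiset.card_map, Finset.erase_val,
      Multiset.card_erase_of_mem (by simp : i ∈ (Finset.univ.val : Multiset (Fin n)))]
    simp [hmdef]
  have hkm : k + 1 ≤ m := by omega
  have hstep : ∀ j : ℕ, j + 1 ≤ k → t * μ.esymm j ≤ μ.esymm (j+1) := by
    intro j hjk
    have h := hl (j+1) (Finset.mem_Icc.mpr ⟨by omega, hjk⟩)
    rw [hSm, esymm_cons] at h
    rw [htdef]
    linarith
  have hpow : ∀ j : ℕ, j ≤ k → t ^ j ≤ μ.esymm j := by
    intro j
    induction j with
    | zero => intro _; rw [esymm_zero', pow_zero]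
    | succ j ih =>
      intro hjk
      have h1 := ih (by omega)
      have h2 := hstep j hjk
      calc t ^ (j+1) = t * t ^ j := by ring
        _ ≤ t * μ.esymm j := by exact mul_le_mul_of_nonneg_left h1 ht.le
        _ ≤ μ.esymm (j+1) := h2
  have epos : ∀ j : ℕ, j ≤ k → 0 < μ.esymm j := fun j hj =>
    lt_of_lt_of_le (pow_pos ht j) (hpow j hj)
  have cpos : ∀ j : ℕ, j ≤ m → (0:ℝ) < (m.choose j : ℝ) := fun j hj => by
    exact_mod_cast Nat.choose_pos hj
  -- Maclaurin chain
  have chain : ∀ j : ℕ, 1 ≤ j → j ≤ k →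
      μ.esymm j / (m.choose j : ℝ) ≤
        (μ.esymm (j-1) / (m.choose (j-1) : ℝ)) * (μ.esymm 1 / (m.choose 1 : ℝ)) := by
    intro j h1
    induction j, h1 using Nat.le_induction with
    | base =>
      intro _
      norm_num [esymm_zero']
    | succ j hj1 ih =>
      intro hjk
      have ihj := ih (by omega)
      simp only [Nat.add_sub_cancel]
      have hC1 := cpos 1 (by omega)
      have hCjm := cpos (j-1) (by omega)
      have hCj := cpos j (by omega)
      have hCjp := cpos (j+1) (by omega)
      have he0 := epos (j-1) (by omega)
      have he1 := epos 1 (by omega)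
      have hej := epos j (by omega)
      rw [div_mul_div_comm, div_le_div_iff₀ (by positivity) (by positivity)] at ihj ⊢
      have hN := newton μ j hj1 (by rw [hcμ]; omega)
      rw [hcμ] at hN
      have hW : (0:ℝ) < (m.choose j : ℝ) * μ.esymm (j-1) * μ.esymm 1 := by positivity
      have big : (μ.esymm (j+1) * ((m.choose j : ℝ) * (m.choose 1 : ℝ)))
            * ((m.choose j : ℝ) * μ.esymm (j-1) * μ.esymm 1)
          ≤ (μ.esymm j * μ.esymm 1 * (m.choose (j+1) : ℝ))
            * ((m.choose j : ℝ) * μ.esymm (j-1) * μ.esymm 1) := by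
        calc (μ.esymm (j+1) * ((m.choose j : ℝ) * (m.choose 1 : ℝ)))
              * ((m.choose j : ℝ) * μ.esymm (j-1) * μ.esymm 1)
            = ((m.choose j : ℝ)^2 * (μ.esymm (j-1) * μ.esymm (j+1)))
              * (μ.esymm 1 * (m.choose 1 : ℝ)) := by ring
          _ ≤ (((m.choose (j-1) : ℝ)) * ((m.choose (j+1) : ℝ)) * μ.esymm j ^ 2)
              * (μ.esymm 1 * (m.choose 1 : ℝ)) := by
                exact mul_le_mul_of_nonneg_right hN (by positivity)
          _ = (μ.esymm j * ((m.choose (j-1) : ℝ) * (m.choose 1 : ℝ)))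
              * ((m.choose (j+1) : ℝ) * μ.esymm j * μ.esymm 1) := by ring
          _ ≤ (μ.esymm (j-1) * μ.esymm 1 * (m.choose j : ℝ))
              * ((m.choose (j+1) : ℝ) * μ.esymm j * μ.esymm 1) := by
                exact mul_le_mul_of_nonneg_right ihj (by positivity)
          _ = (μ.esymm j * μ.esymm 1 * (m.choose (j+1) : ℝ))
              * ((m.choose j : ℝ) * μ.esymm (j-1) * μ.esymm 1) := by ring
      exact le_of_mul_le_mul_right big hW
  -- final bound: t * k * (n-1) ≤ e1 * (n-k)
  have hchk := chain k (by omega) le_rfl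
  have hC1 := cpos 1 (by omega)
  have hCkm := cpos (k-1) (by omega)
  have hCk := cpos k (by omega)
  have he0 := epos (k-1) (by omega)
  have he1 := epos 1 (by omega)
  rw [div_mul_div_comm, div_le_div_iff₀ (by positivity) (by positivity)] at hchk
  -- hchk : e_k * (C_{k-1} * C_1) ≤ e_{k-1} * e_1 * C_k
  have hstepk := hstep (k-1) (by omega)
  rw [show k - 1 + 1 = k from by omega] at hstepk
  -- cancel e_{k-1}
  have hTT : t * ((m.choose (k-1) : ℝ) * (m.choose 1 : ℝ)) * μ.esymm (k-1)
      ≤ μ.esymm 1 * (m.choose k : ℝ) * μ.esymm (k-1) := by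
    calc t * ((m.choose (k-1) : ℝ) * (m.choose 1 : ℝ)) * μ.esymm (k-1)
        = (t * μ.esymm (k-1)) * ((m.choose (k-1) : ℝ) * (m.choose 1 : ℝ)) := by ring
      _ ≤ μ.esymm k * ((m.choose (k-1) : ℝ) * (m.choose 1 : ℝ)) := by
          exact mul_le_mul_of_nonneg_right hstepk (by positivity)
      _ ≤ μ.esymm (k-1) * μ.esymm 1 * (m.choose k : ℝ) := hchk
      _ = μ.esymm 1 * (m.choose k : ℝ) * μ.esymm (k-1) := by ring
  have hT : t * ((m.choose (k-1) : ℝ) * (m.choose 1 : ℝ)) ≤ μ.esymm 1 * (m.choose k : ℝ) :=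
    le_of_mul_le_mul_right hTT he0
  -- nat identity : C(m,k) * k = C(m,k-1) * (m - k + 1)
  have hid : (m.choose k) * k = (m.choose (k-1)) * (m - k + 1) := by
    have := Nat.choose_succ_right_eq m (k-1)
    rw [show k - 1 + 1 = k from by omega] at this
    have h2 : m - (k-1) = m - k + 1 := by omega
    rw [h2] at this
    exact this
  have hfinal : t * (k:ℝ) * ((n:ℝ) - 1) ≤ μ.esymm 1 * ((n:ℝ) - (k:ℝ)) := by
    have hkpos : (0:ℝ) < (k:ℝ) := by exact_mod_cast Nat.pos_of_ne_zero (by omega)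
    have hidR : ((m.choose k : ℕ):ℝ) * (k:ℝ)
        = ((m.choose (k-1) : ℕ):ℝ) * ((m - k + 1 : ℕ):ℝ) := by
      exact_mod_cast congrArg Nat.cast hid
    have h3 : (t * ((m.choose 1 : ℝ) * (k:ℝ))) * ((m.choose (k-1):ℕ):ℝ)
        ≤ (μ.esymm 1 * ((m - k + 1 : ℕ):ℝ)) * ((m.choose (k-1):ℕ):ℝ) := by
      calc (t * ((m.choose 1 : ℝ) * (k:ℝ))) * ((m.choose (k-1):ℕ):ℝ)
          = (t * ((m.choose (k-1) : ℝ) * (m.choose 1 : ℝ))) * (k:ℝ) := by ring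
        _ ≤ (μ.esymm 1 * (m.choose k : ℝ)) * (k:ℝ) := by
            exact mul_le_mul_of_nonneg_right hT hkpos.le
        _ = μ.esymm 1 * ((m.choose k : ℝ) * (k:ℝ)) := by ring
        _ = μ.esymm 1 * (((m.choose (k-1) : ℕ):ℝ) * ((m - k + 1 : ℕ):ℝ)) := by rw [hidR]
        _ = (μ.esymm 1 * ((m - k + 1 : ℕ):ℝ)) * ((m.choose (k-1):ℕ):ℝ) := by ring
    have h4 := le_of_mul_le_mul_right h3 hCkm
    rw [Nat.choose_one_right] at h4
    have hm' : ((m:ℕ):ℝ) = (n:ℝ) - 1 := by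
      rw [hmdef, Nat.cast_sub (by omega : 1 ≤ n), Nat.cast_one]
    have hmk' : ((m - k + 1:ℕ):ℝ) = (n:ℝ) - (k:ℝ) := by
      rw [show m - k + 1 = n - k from by omega, Nat.cast_sub (by omega : k ≤ n)]
    rw [hm', hmk'] at h4
    linarith [h4]
  have hsum : ∑ j, l j = μ.esymm 1 - t := by
    rw [show (∑ j, l j) = (Multiset.map l Finset.univ.val).sum from rfl, hSm,
      Multiset.sum_cons, esymm_one', htdef]
    ring
  have hli : l i = -t := by rw [htdef]; ring
  rw [hsum, hli]
  nlinarith [hfinal]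

end PG

namespace PG

lemma esymm_replicate (m j : ℕ) :
    (Multiset.replicate m (1:ℝ)).esymm j = (m.choose j : ℝ) := by
  induction m generalizing j with
  | zero =>
    match j with
    | 0 => simp [esymm_zero']
    | (j+1) => rw [esymm_of_card_lt (by simp)]; simp
  | succ m ih =>
    rw [Multiset.replicate_succ]
    match j with
    | 0 => simp [esymm_zero']
    | (j+1) =>
      rw [esymm_cons, ih, ih, Nat.choose_succ_succ]
      push_cast
      ring

lemma extremal_multiset (n : ℕ) (i0 : Fin n) (c : ℝ) :
    Multiset.map (fun x => if x = i0 then c else 1) Finset.univ.val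
      = c ::ₘ Multiset.replicate (n-1) (1:ℝ) := by
  have h1 : (Finset.univ.val : Multiset (Fin n)) = i0 ::ₘ Finset.univ.val.erase i0 :=
    (Multiset.cons_erase (by simp : i0 ∈ (Finset.univ.val : Multiset (Fin n)))).symm
  conv_lhs => rw [h1]
  rw [Multiset.map_cons, if_pos rfl]
  congr 1
  apply Multiset.eq_replicate.mpr
  constructor
  · rw [Multiset.card_map,
      Multiset.card_erase_of_mem (by simp : i0 ∈ (Finset.univ.val : Multiset (Fin n)))]
    simp
  · intro b hb
    obtain ⟨a, ha, rfl⟩ := Multiset.mem_map.1 hb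
    have hnodup : (Finset.univ.val : Multiset (Fin n)).Nodup := Finset.univ.nodup
    have hne : a ≠ i0 := by
      intro h
      subst h
      exact (Multiset.Nodup.notMem_erase hnodup) ha
    rw [if_neg hne]

lemma natkey (n k j' : ℕ) (hkn : 2*k ≤ n) (hk : 1 ≤ k) (hjk : j' + 1 ≤ k) :
    (n - k) * ((n-1).choose j') ≤ k * ((n-1).choose (j'+1)) := by
  have hid := Nat.choose_succ_right_eq (n-1) j'
  have hmul : (n - k) * (j'+1) ≤ k * (n-1-j') := by
    calc (n - k) * (j'+1) ≤ (n - k) * k := Nat.mul_le_mul_left _ hjk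
      _ = k * (n - k) := Nat.mul_comm _ _
      _ ≤ k * (n-1-j') := Nat.mul_le_mul_left _ (by omega)
  have key : ((n - k) * ((n-1).choose j')) * (j'+1) ≤ (k * ((n-1).choose (j'+1))) * (j'+1) := by
    calc ((n - k) * ((n-1).choose j')) * (j'+1)
        = ((n-1).choose j') * ((n - k) * (j'+1)) := by ring
      _ ≤ ((n-1).choose j') * (k * (n-1-j')) := Nat.mul_le_mul_left _ hmul
      _ = k * ((n-1).choose j' * (n-1-j')) := by ring
      _ = k * ((n-1).choose (j'+1) * (j'+1)) := by rw [← hid]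
      _ = (k * ((n-1).choose (j'+1))) * (j'+1) := by ring
  exact Nat.le_of_mul_le_mul_right key (by omega)

lemma extremal_garding (n k : ℕ) (hk : 1 ≤ k) (hkn : 2*k ≤ n) (i0 : Fin n) :
    (fun x : Fin n => if x = i0 then -(((n:ℝ)-(k:ℝ))/(k:ℝ)) else (1:ℝ)) ∈ GardingCone n k := by
  intro j hj
  obtain ⟨hj1, hjk⟩ := Finset.mem_Icc.1 hj
  rw [extremal_multiset n i0 _]
  obtain ⟨j', rfl⟩ : ∃ j', j = j' + 1 := ⟨j - 1, by omega⟩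
  rw [esymm_cons, esymm_replicate, esymm_replicate]
  have hkR : (0:ℝ) < (k:ℝ) := by exact_mod_cast Nat.pos_of_ne_zero (by omega)
  have hnat := natkey n k j' hkn hk hjk
  have hnatR : ((n:ℝ) - (k:ℝ)) * (((n-1).choose j' : ℕ):ℝ) ≤ (k:ℝ) * (((n-1).choose (j'+1) : ℕ):ℝ) := by
    have := (Nat.cast_le (α := ℝ)).mpr hnat
    push_cast [Nat.cast_sub (show k ≤ n by omega)] at this
    exact_mod_cast this
  have hdiv : (((n:ℝ)-(k:ℝ))/(k:ℝ)) * (((n-1).choose j' : ℕ):ℝ) ≤ (((n-1).choose (j'+1) : ℕ):ℝ) := by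
    rw [div_mul_eq_mul_div, div_le_iff₀ hkR]
    linarith [hnatR]
  linarith [hdiv]

end PG


end PGAux

/-- for `1 ≤ k ≤ n/2`, the critical exponent
`p_{Γ^k} = max {p : Γ^k ⊆ A^(p)}` equals `n(k-1)/(n-k) + 2`, a value lying
in `[2, n]`. -/
theorem pGamma_k_value (n k : ℕ) (hk : 1 ≤ k) (hkn : 2 * k ≤ n) :
    IsGreatest {p : ℝ | GardingCone n k ⊆ Acone n p}
      ((n : ℝ) * ((k : ℝ) - 1) / ((n : ℝ) - k) + 2) ∧
    2 ≤ (n : ℝ) * ((k : ℝ) - 1) / ((n : ℝ) - k) + 2 ∧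
    (n : ℝ) * ((k : ℝ) - 1) / ((n : ℝ) - k) + 2 ≤ (n : ℝ) := by
  have hkltn : k < n := by omega
  have hnk : (0:ℝ) < (n:ℝ) - (k:ℝ) := by
    rw [sub_pos]; exact_mod_cast hkltn
  have hk1R : (1:ℝ) ≤ (k:ℝ) := by exact_mod_cast hk
  have hkR : (0:ℝ) < (k:ℝ) := by linarith
  have hknR : 2*(k:ℝ) ≤ (n:ℝ) := by exact_mod_cast hkn
  have hcoef : (0:ℝ) ≤ (n:ℝ) * ((k:ℝ) - 1) / ((n:ℝ) - k) := by
    apply div_nonneg _ hnk.le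
    apply mul_nonneg (by positivity)
    linarith
  refine ⟨⟨?_, ?_⟩, by linarith, ?_⟩
  · -- membership
    intro l hl
    simp only [GardingCone, Set.mem_setOf_eq] at hl
    simp only [Acone, Set.mem_setOf_eq]
    intro idx
    have heq : (n : ℝ) * ((k : ℝ) - 1) / ((n : ℝ) - k) + 2 - 2
        = (n : ℝ) * ((k : ℝ) - 1) / ((n : ℝ) - k) := by ring
    rw [heq]
    have hsig : 0 ≤ ∑ j, l j := by
      have h1 := hl 1 (Finset.mem_Icc.mpr ⟨le_refl 1, hk⟩)
      rw [PG.esymm_one'] at h1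
      exact h1
    rcases le_or_gt 0 (l idx) with hsign | hsign
    · exact add_nonneg (mul_nonneg hcoef hsign) hsig
    · rcases eq_or_lt_of_le hk with hk1 | hk2
      · rw [← hk1]
        norm_num
        exact hsig
      · have key := PG.main_ineq n k hk2 hkn l hl idx hsign
        have heq2 : (n : ℝ) * ((k : ℝ) - 1) / ((n : ℝ) - k) * l idx + ∑ j, l j
            = ((n:ℝ) * ((k:ℝ) - 1) * l idx + ((n:ℝ) - (k:ℝ)) * ∑ j, l j) / ((n:ℝ) - (k:ℝ)) := by
          field_simp
        rw [heq2]
        exact div_nonneg key hnk.le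
  · -- upper bound
    intro p hp
    set i0 : Fin n := ⟨0, by omega⟩
    have hmem := PG.extremal_garding n k hk hkn i0
    have hA := hp hmem i0
    simp only [Acone, Set.mem_setOf_eq] at hA
    set s : ℝ := ((n:ℝ)-(k:ℝ))/(k:ℝ) with hsdef
    have hspos : 0 < s := by positivity
    have hsum : (∑ i : Fin n, if i = i0 then -s else (1:ℝ)) = -s + ((n:ℝ) - 1) := by
      rw [show (∑ i : Fin n, if i = i0 then -s else (1:ℝ))
          = (Multiset.map (fun x : Fin n => if x = i0 then -s else (1:ℝ)) Finset.univ.val).sum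
          from rfl,
        PG.extremal_multiset n i0 (-s), Multiset.sum_cons, Multiset.sum_replicate]
      have : ((n-1 : ℕ):ℝ) = (n:ℝ) - 1 := by
        rw [Nat.cast_sub (by omega : 1 ≤ n), Nat.cast_one]
      simp [this]
    simp only [if_true] at hA
    rw [hsum] at hA
    -- hA : 0 ≤ (p - 2) * (-s) + (-s + (n - 1))
    rw [← sub_le_iff_le_add, le_div_iff₀ hnk]
    have h6 := mul_le_mul_of_nonneg_right
      (show (p-2) * s ≤ (n:ℝ) - 1 - s by linarith) hkR.le
    rw [hsdef] at h6
    have h7 : ((n:ℝ) - 1 - ((n:ℝ)-(k:ℝ))/(k:ℝ)) * (k:ℝ) = (n:ℝ)*((k:ℝ)-1) := by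
      field_simp
      ring
    have h8 : (p-2) * (((n:ℝ)-(k:ℝ))/(k:ℝ)) * (k:ℝ) = (p-2)*((n:ℝ)-(k:ℝ)) := by
      field_simp
    rw [h7, h8] at h6
    exact h6
  · -- p* ≤ n
    rw [div_add' _ _ _ hnk.ne', div_le_iff₀ hnk]
    nlinarith [mul_nonneg (show (0:ℝ) ≤ (n:ℝ) - 2*k by linarith)
      (show (0:ℝ) ≤ (n:ℝ) - 1 by linarith)]
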